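/- arXiv:1303.2670 — 2 statements merged into one kernel-verified Lean document; each statement's English description precedes it below -/
import Mathlib

section
/- Let R be a family of real-valued functions on a set E and let e_1, …, e_d : E → ℝ be finitely many functions such that {e_1, …, e_d} and R generate the same uniformity on E. Define ψ : E → ℝ^d by ψ(x) = (e_1(x), …, e_d(x)). Then for every f ∈ R there exists a continuous function F from the closure of ψ(E) in ℝ^d to ℝ such that F(ψ(x)) = f(x) for every x ∈ E. -/
open Filter Topology

/-- Two families of real-valued functions on `E` generate the same uniformity if,
for every sequence in `E`, all the `H`-images are Cauchy iff all the `G`-images are. -/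
def SameUniformity {E : Type*} (H G : Set (E → ℝ)) : Prop :=
  ∀ x : ℕ → E,
    (∀ h ∈ H, CauchySeq fun n => h (x n)) ↔ (∀ g ∈ G, CauchySeq fun n => g (x n))

/-- The embedding `ψ(x) = (e₁(x), …, e_d(x))` of `E` into `ℝ^d`. -/
def psiMap {E : Type*} {d : ℕ} (e : Fin d → E → ℝ) (x : E) : Fin d → ℝ :=
  fun i => e i x

private lemma interleave_tendsto {X : Type*} [PseudoMetricSpace X] {x y : ℕ → X} {p : X}
    (hx : Tendsto x atTop (𝓝 p)) (hy : Tendsto y atTop (𝓝 p)) :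
    Tendsto (fun n => if n % 2 = 0 then x (n / 2) else y (n / 2)) atTop (𝓝 p) := by
  rw [Metric.tendsto_atTop] at hx hy ⊢
  intro ε hε
  obtain ⟨N₁, h₁⟩ := hx ε hε
  obtain ⟨N₂, h₂⟩ := hy ε hε
  refine ⟨2 * (N₁ + N₂), fun n hn => ?_⟩
  show dist (if n % 2 = 0 then x (n / 2) else y (n / 2)) p < ε
  split_ifs with hpar
  · exact h₁ _ (by omega)
  · exact h₂ _ (by omega)

private lemma cauchy_of_psi {E : Type*} {d : ℕ} {R : Set (E → ℝ)} {e : Fin d → E → ℝ}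
    (h : SameUniformity (Set.range e) R) {f : E → ℝ} (hf : f ∈ R) (x : ℕ → E)
    (hx : CauchySeq (fun n => psiMap e (x n))) : CauchySeq (fun n => f (x n)) := by
  refine (h x).1 ?_ f hf
  rintro g ⟨i, rfl⟩
  exact (Pi.uniformContinuous_proj _ i).comp_cauchySeq hx

private lemma exists_limit {E : Type*} {d : ℕ} {R : Set (E → ℝ)} {e : Fin d → E → ℝ}
    (h : SameUniformity (Set.range e) R) {f : E → ℝ} (hf : f ∈ R)
    {p : Fin d → ℝ} (hp : p ∈ closure (Set.range (psiMap e))) :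
    ∃ L : ℝ, ∀ x : ℕ → E, Tendsto (fun n => psiMap e (x n)) atTop (𝓝 p) →
      Tendsto (fun n => f (x n)) atTop (𝓝 L) := by
  obtain ⟨u, hu_mem, hu_lim⟩ := mem_closure_iff_seq_limit.1 hp
  choose x₀ hx₀ using hu_mem
  have hψx₀ : Tendsto (fun n => psiMap e (x₀ n)) atTop (𝓝 p) := by
    have : (fun n => psiMap e (x₀ n)) = u := funext hx₀
    rwa [this]
  obtain ⟨L, hL⟩ := cauchySeq_tendsto_of_complete (cauchy_of_psi h hf x₀ hψx₀.cauchySeq)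
  refine ⟨L, fun x hx => ?_⟩
  set z : ℕ → E := fun n => if n % 2 = 0 then x₀ (n / 2) else x (n / 2) with hz
  have hψz : Tendsto (fun n => psiMap e (z n)) atTop (𝓝 p) := by
    have := interleave_tendsto hψx₀ hx
    convert this using 2 with n
    simp only [hz, apply_ite (psiMap e)]
  obtain ⟨M, hM⟩ := cauchySeq_tendsto_of_complete (cauchy_of_psi h hf z hψz.cauchySeq)
  have h2 : Tendsto (fun n : ℕ => 2 * n) atTop atTop :=
    tendsto_atTop_atTop.2 fun b => ⟨b, fun a ha => by omega⟩
  have h2' : Tendsto (fun n : ℕ => 2 * n + 1) atTop atTop :=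
    tendsto_atTop_atTop.2 fun b => ⟨b, fun a ha => by omega⟩
  have he : Tendsto (fun n => f (x₀ n)) atTop (𝓝 M) := by
    refine (hM.comp h2).congr fun n => ?_
    simp only [Function.comp_apply, hz]
    rw [if_pos (by omega), show 2 * n / 2 = n from by omega]
  have ho : Tendsto (fun n => f (x n)) atTop (𝓝 M) := by
    refine (hM.comp h2').congr fun n => ?_
    simp only [Function.comp_apply, hz]
    rw [if_neg (by omega), show (2 * n + 1) / 2 = n from by omega]
  rwa [tendsto_nhds_unique hL he]

/-- If `{e₁, …, e_d} ∼ R`, every `f ∈ R` extends to a continuous function on the closure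
of `ψ(E)` in `ℝ^d`. -/
theorem exists_continuous_extension {E : Type*} {d : ℕ} (R : Set (E → ℝ))
    (e : Fin d → E → ℝ) (h : SameUniformity (Set.range e) R) :
    ∀ f ∈ R, ∃ F : closure (Set.range (psiMap e)) → ℝ, Continuous F ∧
      ∀ x : E, F ⟨psiMap e x, subset_closure (Set.mem_range_self x)⟩ = f x := by
  intro f hf
  have spec : ∀ p : closure (Set.range (psiMap e)), ∃ L : ℝ, ∀ x : ℕ → E,
      Tendsto (fun n => psiMap e (x n)) atTop (𝓝 p.1) →
      Tendsto (fun n => f (x n)) atTop (𝓝 L) := fun p => exists_limit h hf p.2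
  choose F hF using spec
  refine ⟨F, ?_, ?_⟩
  · rw [continuous_iff_seqContinuous]
    intro q p hq
    have hsel : ∀ n : ℕ, ∃ a : E, dist (psiMap e a) (q n).1 < 1 / (n + 1) ∧
        dist (f a) (F (q n)) < 1 / (n + 1) := by
      intro n
      obtain ⟨u, hu_mem, hu_lim⟩ := mem_closure_iff_seq_limit.1 (q n).2
      choose y hy using hu_mem
      have hψy : Tendsto (fun m => psiMap e (y m)) atTop (𝓝 (q n).1) := by
        have : (fun m => psiMap e (y m)) = u := funext hy
        rwa [this]
      have hfy := hF (q n) y hψy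
      rw [Metric.tendsto_atTop] at hψy hfy
      obtain ⟨N₁, h₁⟩ := hψy (1 / (n + 1)) (by positivity)
      obtain ⟨N₂, h₂⟩ := hfy (1 / (n + 1)) (by positivity)
      exact ⟨y (N₁ + N₂), h₁ _ (by omega), h₂ _ (by omega)⟩
    choose x hx₁ hx₂ using hsel
    have hqv : Tendsto (fun n => (q n).1) atTop (𝓝 p.1) :=
      (continuous_subtype_val.tendsto p).comp hq
    have hdist0 : Tendsto (fun n : ℕ => 1 / ((n : ℝ) + 1)) atTop (𝓝 0) :=
      tendsto_one_div_add_atTop_nhds_zero_nat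
    have hd1 : Tendsto (fun n => dist (psiMap e (x n)) ((q n).1)) atTop (𝓝 0) :=
      squeeze_zero (fun n => dist_nonneg) (fun n => (hx₁ n).le) hdist0
    have hψx : Tendsto (fun n => psiMap e (x n)) atTop (𝓝 p.1) :=
      hqv.congr_dist (by simpa [dist_comm] using hd1)
    have h1 := hF p x hψx
    have hd2 : Tendsto (fun n => dist (f (x n)) (F (q n))) atTop (𝓝 0) :=
      squeeze_zero (fun n => dist_nonneg) (fun n => (hx₂ n).le) hdist0
    exact h1.congr_dist hd2
  · intro a
    have := hF ⟨psiMap e a, subset_closure (Set.mem_range_self a)⟩ (fun _ => a)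
      tendsto_const_nhds
    exact tendsto_nhds_unique this tendsto_const_nhds
end

section
/- Let E be a closed subset of ℝ^d and let H be a family of continuous real-valued functions on E. Then the σ-algebra on E generated by H coincides with the Borel σ-algebra of E if and only if H separates the points of E (i.e., for all x ≠ y in E there exists h ∈ H with h(x) ≠ h(y)). -/
open MeasurableSpace Set

/-- comap of a constant function is below any σ-algebra. -/
lemma comap_const_le {α β : Type*} (m : MeasurableSpace β) (m' : MeasurableSpace α) (c : β) :
    MeasurableSpace.comap (fun _ : α => c) m ≤ m' := by
  rintro s ⟨t, -, rfl⟩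
  by_cases hc : c ∈ t
  · have : (fun _ : α => c) ⁻¹' t = Set.univ := by
      ext a; simp [hc]
    rw [this]; exact MeasurableSet.univ
  · have : (fun _ : α => c) ⁻¹' t = ∅ := by
      ext a; simp [hc]
    rw [this]; exact MeasurableSet.empty

/-- Proposition A.1: for a closed subset `E` of `ℝ^d` and a family `H` of continuous
real-valued functions on `E`, the σ-algebra generated by `H` is the Borel σ-algebra of
`E` if and only if `H` separates the points of `E`. -/
theorem generated_eq_borel_iff_separates {d : ℕ} (E : Set (Fin d → ℝ)) (hE : IsClosed E)
    (H : Set (↥E → ℝ)) (hH : ∀ h ∈ H, Continuous h) :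
    (⨆ h ∈ H, MeasurableSpace.comap h (borel ℝ)) = borel ↥E ↔
      ∀ x y : ↥E, x ≠ y → ∃ h ∈ H, h x ≠ h y := by
  have hborelE : borel ↥E = (inferInstance : MeasurableSpace ↥E) :=
    BorelSpace.measurable_eq.symm
  have hborelR : borel ℝ = (inferInstance : MeasurableSpace ℝ) :=
    BorelSpace.measurable_eq.symm
  haveI : PolishSpace ↥E := hE.polishSpace
  constructor
  · -- generated = borel ⇒ separating
    intro hgen x y hxy
    by_contra hcon
    push_neg at hcon
    -- the σ-algebra of sets not distinguishing x and y
    let m₀ : MeasurableSpace ↥E :=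
      { MeasurableSet' := fun s => (x ∈ s ↔ y ∈ s)
        measurableSet_empty := Iff.rfl
        measurableSet_compl := fun s hs => not_congr hs
        measurableSet_iUnion := fun f hf => by
          simp only [Set.mem_iUnion]
          exact exists_congr hf }
    have hle : (⨆ h ∈ H, MeasurableSpace.comap h (borel ℝ)) ≤ m₀ := by
      refine iSup₂_le fun h hh => ?_
      rintro s ⟨t, -, rfl⟩
      show x ∈ h ⁻¹' t ↔ y ∈ h ⁻¹' t
      simp [Set.mem_preimage, hcon h hh]
    have hx : (x ∈ ({x} : Set ↥E) ↔ y ∈ ({x} : Set ↥E)) := by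
      refine hle {x} ?_
      rw [hgen, hborelE]
      exact measurableSet_singleton x
    exact hxy (hx.mp rfl).symm
  · -- separating ⇒ generated = borel
    intro hsep
    refine le_antisymm ?_ ?_
    · refine iSup₂_le fun h hh => ?_
      rw [hborelE, hborelR]
      exact ((hH h hh).measurable).comap_le
    · -- find a countable separating subfamily
      set ι := {h : ↥E → ℝ // h ∈ H}
      set s : ι → Set (↥E × ↥E) := fun h => {p | h.1 p.1 ≠ h.1 p.2} with hs_def
      have hso : ∀ i, IsOpen (s i) := fun i =>
        isOpen_ne_fun ((hH i.1 i.2).comp continuous_fst) ((hH i.1 i.2).comp continuous_snd)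
      obtain ⟨T, hTc, hTU⟩ := TopologicalSpace.isOpen_iUnion_countable s hso
      -- enumerate T together with the zero function
      set T' : Set (↥E → ℝ) := insert 0 ((fun i : ι => i.1) '' T) with hT'_def
      have hT'c : T'.Countable := (hTc.image _).insert 0
      obtain ⟨f, hf⟩ := hT'c.exists_eq_range ⟨0, Set.mem_insert _ _⟩
      have hf_mem : ∀ n, f n = 0 ∨ f n ∈ H := by
        intro n
        have : f n ∈ T' := hf ▸ Set.mem_range_self n
        rcases this with h0 | ⟨i, -, hi⟩
        · exact Or.inl h0
        · exact Or.inr (hi ▸ i.2)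
      have hf_cont : ∀ n, Continuous (f n) := by
        intro n
        rcases hf_mem n with h0 | hh
        · rw [h0]; exact continuous_const
        · exact hH _ hh
      -- the product map
      set Φ : ↥E → (ℕ → ℝ) := fun z n => f n z with hΦ_def
      have hΦc : Continuous Φ := continuous_pi fun n => hf_cont n
      have hΦinj : Function.Injective Φ := by
        intro x y hxy
        by_contra hne
        obtain ⟨h, hh, hhs⟩ := hsep x y hne
        have hmem : (x, y) ∈ ⋃ i, s i :=
          Set.mem_iUnion.2 ⟨⟨h, hh⟩, hhs⟩
        rw [← hTU] at hmem
        obtain ⟨i, hiT, hi⟩ := Set.mem_iUnion₂.1 hmem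
        have : i.1 ∈ T' := Set.mem_insert_of_mem _ ⟨i, hiT, rfl⟩
        rw [hf] at this
        obtain ⟨n, hn⟩ := this
        have : f n x = f n y := congrFun hxy n
        rw [hn] at this
        exact hi this
      have hemb : MeasurableEmbedding Φ := hΦc.measurableEmbedding hΦinj
      -- conclude
      rw [hborelE]
      intro u hu
      have himg : MeasurableSet (Φ '' u) := hemb.measurableSet_image.2 hu
      have hu_eq : u = Φ ⁻¹' (Φ '' u) := (Set.preimage_image_eq u hΦinj).symm
      rw [hu_eq]
      have hcomap : MeasurableSpace.comap Φ (inferInstance : MeasurableSpace (ℕ → ℝ)) ≤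
          ⨆ h ∈ H, MeasurableSpace.comap h (borel ℝ) := by
        have : (inferInstance : MeasurableSpace (ℕ → ℝ)) =
            ⨆ n : ℕ, MeasurableSpace.comap (fun g : ℕ → ℝ => g n)
              (inferInstance : MeasurableSpace ℝ) := rfl
        rw [this, MeasurableSpace.comap_iSup]
        refine iSup_le fun n => ?_
        rw [MeasurableSpace.comap_comp]
        show MeasurableSpace.comap (f n) _ ≤ _
        rcases hf_mem n with h0 | hh
        · rw [h0]; exact comap_const_le _ _ _
        · rw [← hborelR]
          exact le_iSup₂ (f := fun h _ => MeasurableSpace.comap h (borel ℝ)) (f n) hh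
      exact hcomap _ ⟨Φ '' u, himg, rfl⟩
end
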